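/- arXiv:2403.15086 — 2 statements merged into one kernel-verified Lean document; each statement's English description precedes it below -/
import Mathlib

section
/- For an admissible index $\mathbf{k}=(k_1,\ldots,k_r)$, the derivative of the interpolated multiple zeta value with respect to the interpolation parameter satisfies $\frac{d}{dt}\zeta^t(\mathbf{k}) = \sum_{\sigma(\mathbf{k}')=1} \zeta^t(\mathbf{k}')$, where the sum runs over all indices obtained from $(k_1\square\cdots\square k_r)$ by filling exactly one $\square$ with a plus sign and the rest with commas. -/
open scoped BigOperators
open MeasureTheory

/-- Multiple zeta value for an index given as a list. -/
noncomputable def mzvL (k : List ℕ) : ℝ :=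
  ∑' m : {f : Fin k.length → ℕ+ // StrictMono f},
    ∏ i, (1 : ℝ) / (((m.1 i : ℕ+) : ℕ) : ℝ) ^ (k.get i)

/-- Multiple zeta-star value for an index given as a list. -/
noncomputable def zetaStarL (k : List ℕ) : ℝ :=
  ∑' m : {f : Fin k.length → ℕ+ // Monotone f},
    ∏ i, (1 : ℝ) / (((m.1 i : ℕ+) : ℕ) : ℝ) ^ (k.get i)

/-- Riemann zeta at a natural number argument. -/
noncomputable def rz (s : ℕ) : ℝ := ∑' n : ℕ+, (1 : ℝ) / ((n : ℕ) : ℝ) ^ s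

/-- Multiple polylogarithm (single variable). -/
noncomputable def LiL (k : List ℕ) (z : ℝ) : ℝ :=
  ∑' m : {f : Fin k.length → ℕ+ // StrictMono f},
    z ^ (if h : 0 < k.length then ((m.1 ⟨k.length - 1, Nat.sub_lt h Nat.one_pos⟩ : ℕ+) : ℕ) else 0)
      / ∏ i, (((m.1 i : ℕ+) : ℕ) : ℝ) ^ (k.get i)

/-- Arakawa-Kaneko multiple zeta function. -/
noncomputable def xiL (k : List ℕ) (s : ℝ) : ℝ :=
  (1 / Real.Gamma s) *
    ∫ t in Set.Ioi (0 : ℝ), t ^ (s - 1) / (Real.exp t - 1) * LiL k (1 - Real.exp (-t))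

/-- All indices obtained from `k` by filling each box with a comma or a plus. -/
def fills : List ℕ → List (List ℕ)
  | [] => [[]]
  | [a] => [[a]]
  | a :: b :: rest => ((fills (b :: rest)).map (a :: ·)) ++ fills ((a + b) :: rest)
termination_by l => l.length

/-- Interpolated multiple zeta value (t-MZV). -/
noncomputable def zetaT (t : ℝ) (k : List ℕ) : ℝ :=
  ((fills k).map (fun k' => t ^ (k.length - k'.length) * mzvL k')).sum

/-- t-Arakawa-Kaneko multiple zeta value. -/
noncomputable def xiT (t : ℝ) (k : List ℕ) (s : ℝ) : ℝ :=
  ((fills k).map (fun k' => t ^ (k.length - k'.length) * xiL k' s)).sum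

namespace Stmt13Aux

def F1 (k : List ℕ) : List (List ℕ) :=
  (fills k).filter (fun k' => k'.length + 1 = k.length)

def headAdd (a : ℕ) : List ℕ → List ℕ
  | [] => []
  | c :: m => (a + c) :: m

lemma fills_length_le : ∀ (l : List ℕ), ∀ w ∈ fills l, w.length ≤ l.length
  | [], w, hw => by simp [fills] at hw; simp [hw]
  | [a], w, hw => by simp [fills] at hw; simp [hw]
  | a :: b :: rest, w, hw => by
      rw [fills] at hw
      rcases List.mem_append.mp hw with h | h
      · rcases List.mem_map.mp h with ⟨m, hm, rfl⟩
        have := fills_length_le (b :: rest) m hm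
        simp at this ⊢; omega
      · have := fills_length_le ((a + b) :: rest) w h
        simp at this ⊢; omega
termination_by l => l.length

lemma filter_full : ∀ (l : List ℕ),
    (fills l).filter (fun w => w.length = l.length) = [l]
  | [] => by simp [fills]
  | [a] => by simp [fills]
  | a :: b :: rest => by
      rw [fills, List.filter_append, List.filter_map]
      have h1 : (fun w => decide (w.length = (a :: b :: rest).length)) ∘ (a :: ·)
          = fun w => decide (w.length = (b :: rest).length) := by
        funext w; simp
      rw [h1, filter_full (b :: rest)]
      have h2 : (fills ((a + b) :: rest)).filter
          (fun w => w.length = (a :: b :: rest).length) = [] := by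
        rw [List.filter_eq_nil_iff]
        intro w hw
        have := fills_length_le ((a + b) :: rest) w hw
        simp at this ⊢; omega
      rw [h2]; simp
termination_by l => l.length

lemma F1_nil : F1 [] = [] := by simp [F1, fills]

lemma F1_single (a : ℕ) : F1 [a] = [] := by simp [F1, fills]

lemma F1_cons (a b : ℕ) (rest : List ℕ) :
    F1 (a :: b :: rest) = (F1 (b :: rest)).map (a :: ·) ++ [(a + b) :: rest] := by
  unfold F1
  rw [fills, List.filter_append, List.filter_map]
  have h1 : ((fun (k' : List ℕ) => decide (k'.length + 1 = (a :: b :: rest).length))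
      ∘ (fun x => a :: x)) = fun w => decide (w.length + 1 = (b :: rest).length) := by
    funext w; simp
  have h2 : (fun (w : List ℕ) => decide (w.length + 1 = (a :: b :: rest).length))
      = fun w => decide (w.length = ((a + b) :: rest).length) := by
    funext w; simp only [decide_eq_decide, List.length_cons]; omega
  rw [h1, h2, filter_full]

lemma map_headAdd_F1 (a b : ℕ) (rest : List ℕ) :
    (F1 (b :: rest)).map (headAdd a) = F1 ((a + b) :: rest) := by
  cases rest with
  | nil => simp [F1_single]
  | cons d rest' =>
    rw [F1_cons, F1_cons, List.map_append, List.map_map]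
    simp [headAdd, Nat.add_assoc, Function.comp_def]

lemma sum_map_add {α : Type*} (L : List α) (f g : α → ℝ) :
    (L.map (fun x => f x + g x)).sum = (L.map f).sum + (L.map g).sum := by
  induction L with
  | nil => simp
  | cons h tl ih => simp [ih]; ring

lemma S_cons (c : List ℕ → ℝ) (a : ℕ) (m : List ℕ) (hm : m ≠ []) :
    ((fills (a :: m)).map c).sum =
      ((fills m).map (fun w => c (a :: w))).sum +
        ((fills (headAdd a m)).map c).sum := by
  cases m with
  | nil => exact absurd rfl hm
  | cons c0 m0 =>
    rw [show fills (a :: c0 :: m0)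
        = ((fills (c0 :: m0)).map (a :: ·)) ++ fills ((a + c0) :: m0) from by rw [fills],
      List.map_append, List.sum_append, List.map_map]
    rfl


lemma F1_mem_ne_nil {b : ℕ} {d : ℕ} {rest' : List ℕ} {m : List ℕ}
    (hm : m ∈ F1 (b :: d :: rest')) : m ≠ [] := by
  rw [F1_cons] at hm
  rcases List.mem_append.mp hm with h | h
  · rcases List.mem_map.mp h with ⟨w, _, rfl⟩; simp
  · simp at h; subst h; simp

lemma main : ∀ (k : List ℕ) (c : List ℕ → ℝ),
    ((F1 k).map (fun m => ((fills m).map c).sum)).sum =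
      ((fills k).map (fun w => ((k.length - w.length : ℕ) : ℝ) * c w)).sum
  | [], c => by simp [F1_nil, fills]
  | [a], c => by simp [F1_single, fills]
  | a :: b :: rest, c => by
    have ihl := main (b :: rest) (fun w => c (a :: w))
    have ihl' := main ((a + b) :: rest) c
    -- RHS decomposition
    rw [fills, List.map_append, List.sum_append, List.map_map]
    have hR1 : ((fills (b :: rest)).map
          ((fun w => ((((a :: b :: rest).length : ℕ) - w.length : ℕ) : ℝ) * c w)
            ∘ (a :: ·))).sum
        = ((fills (b :: rest)).map
            (fun w => (((b :: rest).length - w.length : ℕ) : ℝ) * c (a :: w))).sum := by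
      apply congrArg
      apply List.map_congr_left
      intro w _
      simp only [Function.comp, List.length_cons]
      congr 2
      omega
    rw [hR1, ← ihl]
    have hR2 : ((fills ((a + b) :: rest)).map
          (fun w => ((((a :: b :: rest).length : ℕ) - w.length : ℕ) : ℝ) * c w)).sum
        = ((fills ((a + b) :: rest)).map
            (fun w => ((((a + b) :: rest).length - w.length : ℕ) : ℝ) * c w)).sum
          + ((fills ((a + b) :: rest)).map c).sum := by
      rw [← sum_map_add]
      apply congrArg
      apply List.map_congr_left
      intro w hw
      have hle := fills_length_le ((a + b) :: rest) w hw
      simp only [List.length_cons] at hle ⊢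
      have h1 : rest.length + 1 + 1 - w.length = (rest.length + 1 - w.length) + 1 := by omega
      rw [h1]
      push_cast
      ring
    rw [hR2, ← ihl']
    -- LHS decomposition
    rw [F1_cons, List.map_append, List.sum_append, List.map_map]
    simp only [List.map_cons, List.map_nil, List.sum_cons, List.sum_nil, add_zero]
    cases rest with
    | nil => simp [F1_single]
    | cons d rest' =>
      have hL : ((F1 (b :: d :: rest')).map
            ((fun m => ((fills m).map c).sum) ∘ (a :: ·))).sum
          = ((F1 (b :: d :: rest')).map
              (fun m => ((fills m).map (fun w => c (a :: w))).sum
                + ((fills (headAdd a m)).map c).sum)).sum := by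
        apply congrArg
        apply List.map_congr_left
        intro m hm
        exact S_cons c a m (F1_mem_ne_nil hm)
      rw [hL, sum_map_add]
      have hL2 : ((F1 (b :: d :: rest')).map
            (fun m => ((fills (headAdd a m)).map c).sum)).sum
          = ((F1 ((a + b) :: d :: rest')).map (fun m => ((fills m).map c).sum)).sum := by
        rw [← map_headAdd_F1, List.map_map]
        rfl
      rw [hL2]
      ring
termination_by k => k.length

lemma hasDerivAt_list_sum {α : Type*} (L : List α) (f : α → ℝ → ℝ) (f' : α → ℝ) (t : ℝ)
    (h : ∀ a ∈ L, HasDerivAt (fun s => f a s) (f' a) t) :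
    HasDerivAt (fun s => (L.map (fun a => f a s)).sum) ((L.map f').sum) t := by
  induction L with
  | nil => simpa using hasDerivAt_const t (0 : ℝ)
  | cons hd tl ih =>
    simp only [List.map_cons, List.sum_cons]
    exact (h hd (by simp)).add (ih fun a ha => h a (List.mem_cons_of_mem _ ha))

end Stmt13Aux

theorem stmt13 (k : List ℕ) (hne : k ≠ []) (hadm : 2 ≤ k.getLast hne) (t : ℝ) :
    HasDerivAt (fun s : ℝ => zetaT s k)
      ((((fills k).filter (fun k' => k'.length + 1 = k.length)).map
        (fun k' => zetaT t k')).sum) t := by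
  classical
  set c : List ℕ → ℝ := fun w => t ^ (k.length - w.length - 1) * mzvL w with hc
  have hval : (((fills k).filter (fun k' => k'.length + 1 = k.length)).map
        (fun k' => zetaT t k')).sum
      = ((fills k).map (fun w => ((k.length - w.length : ℕ) : ℝ) * c w)).sum := by
    rw [← Stmt13Aux.main k c]
    apply congrArg
    apply List.map_congr_left
    intro m hm
    have hlen : m.length + 1 = k.length := by
      have := (List.mem_filter.mp hm).2
      simpa using this
    unfold zetaT
    apply congrArg
    apply List.map_congr_left
    intro w _
    have he : m.length - w.length = k.length - w.length - 1 := by omega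
    rw [hc, he]
  rw [hval]
  unfold zetaT
  apply Stmt13Aux.hasDerivAt_list_sum (fills k)
    (fun w s => s ^ (k.length - w.length) * mzvL w)
    (fun w => ((k.length - w.length : ℕ) : ℝ) * c w) t
  intro w _
  have h := (hasDerivAt_pow (k.length - w.length) t).mul_const (mzvL w)
  simpa [hc, mul_assoc] using h
end

section
/- For real $t$ and real $x, y$ with $|tx|<1$, $|x|<1$, $|x+y|<1$: $\int_{0<u_1<u_2<1}\left(\frac{1-u_1}{1-u_2}\right)^x\left(\frac{u_2}{u_1}\right)^{tx}\left(\frac{1}{1-u_2}\right)^y\frac{du_1\,du_2}{(1-u_1)u_2} = \sum_{l=1}^{\infty}\frac{\Gamma(l-x)\,\Gamma(1-x-y)}{\Gamma(1-x)\,\Gamma(l+1-x-y)}\cdot\frac{1}{l-tx}$. -/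
open scoped BigOperators
open MeasureTheory

section stmt16aux
open MeasureTheory Real Set

lemma pow_lint {p c : ℝ} (hp : -1 < p) (hc : 0 < c) :
    ∫⁻ u in Ioo (0:ℝ) c, ENNReal.ofReal (u ^ p) = ENNReal.ofReal (c ^ (p+1) / (p+1)) := by
  have hint : IntegrableOn (fun u : ℝ => u ^ p) (Ioo 0 c) := by
    have := (intervalIntegral.intervalIntegrable_rpow' (a := 0) (b := c) hp)
    rw [intervalIntegrable_iff_integrableOn_Ioo_of_le hc.le] at this
    exact this
  rw [← ofReal_integral_eq_lintegral_ofReal hint]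
  · congr 1
    have : ∫ u in Ioo (0:ℝ) c, u ^ p = ∫ u in (0:ℝ)..c, u ^ p := by
      rw [intervalIntegral.integral_of_le hc.le, integral_Ioc_eq_integral_Ioo]
    rw [this, integral_rpow (Or.inl hp), Real.zero_rpow (by linarith)]
    ring_nf
  · filter_upwards [ae_restrict_mem measurableSet_Ioo] with u hu
    exact Real.rpow_nonneg hu.1.le p

lemma beta_eqon {a b : ℝ} :
    Set.EqOn (fun x : ℝ => ((x ^ (a-1) * (1-x) ^ (b-1) : ℝ) : ℂ))
      (fun x : ℝ => (x:ℂ) ^ ((a:ℂ)-1) * (1 - (x:ℂ)) ^ ((b:ℂ)-1)) (Set.uIcc 0 1) := by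
  intro x hx
  rw [Set.uIcc_of_le (by norm_num : (0:ℝ) ≤ 1)] at hx
  have hx0 : 0 ≤ x := hx.1
  have hx1 : 0 ≤ 1 - x := by linarith [hx.2]
  simp only [Complex.ofReal_mul]
  rw [Complex.ofReal_cpow hx0, Complex.ofReal_cpow hx1]
  push_cast
  ring_nf

lemma betaIntegrable {a b : ℝ} (ha : 0 < a) (hb : 0 < b) :
    IntegrableOn (fun u : ℝ => u ^ (a-1) * (1-u) ^ (b-1)) (Set.Ioo 0 1) := by
  have hc := Complex.betaIntegral_convergent (u := a) (v := b) (by simpa) (by simpa)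
  rw [intervalIntegrable_iff_integrableOn_Ioc_of_le (by norm_num : (0:ℝ) ≤ 1)] at hc
  rw [← integrableOn_Ioc_iff_integrableOn_Ioo]
  have h2 : IntegrableOn (fun x : ℝ => ((x ^ (a-1) * (1-x) ^ (b-1) : ℝ) : ℂ)) (Set.Ioc 0 1) :=
    hc.congr_fun (fun x hx => (beta_eqon (Set.Ioc_subset_Icc_self.trans
      Set.Icc_subset_uIcc hx)).symm)
      measurableSet_Ioc
  simpa [IntegrableOn] using h2.re

lemma beta_val {a b : ℝ} (ha : 0 < a) (hb : 0 < b) :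
    ∫ u in Set.Ioo (0:ℝ) 1, u ^ (a-1) * (1-u) ^ (b-1)
      = Real.Gamma a * Real.Gamma b / Real.Gamma (a+b) := by
  have key : Complex.betaIntegral a b
      = ((∫ u in Set.Ioo (0:ℝ) 1, u ^ (a-1) * (1-u) ^ (b-1) : ℝ) : ℂ) := by
    rw [Complex.betaIntegral]
    rw [← intervalIntegral.integral_congr beta_eqon]
    rw [intervalIntegral.integral_ofReal]
    congr 1
    rw [intervalIntegral.integral_of_le (by norm_num : (0:ℝ) ≤ 1),
      integral_Ioc_eq_integral_Ioo]
  have hg := Complex.Gamma_mul_Gamma_eq_betaIntegral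
    (s := a) (t := b) (by simpa) (by simpa)
  rw [key] at hg
  have hne : Real.Gamma (a+b) ≠ 0 := (Real.Gamma_pos_of_pos (by linarith)).ne'
  rw [show ((a:ℂ)+(b:ℂ)) = ((a+b : ℝ) : ℂ) by push_cast; ring] at hg
  simp only [Complex.Gamma_ofReal] at hg
  have h2 : Real.Gamma a * Real.Gamma b
      = Real.Gamma (a+b) * ∫ u in Set.Ioo (0:ℝ) 1, u ^ (a-1) * (1-u) ^ (b-1) := by
    exact_mod_cast hg
  field_simp
  linarith [h2]

lemma beta_lint {a b : ℝ} (ha : 0 < a) (hb : 0 < b) :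
    ∫⁻ u in Set.Ioo (0:ℝ) 1, ENNReal.ofReal (u ^ (a-1) * (1-u) ^ (b-1))
      = ENNReal.ofReal (Real.Gamma a * Real.Gamma b / Real.Gamma (a+b)) := by
  rw [← ofReal_integral_eq_lintegral_ofReal (betaIntegrable ha hb), beta_val ha hb]
  filter_upwards [ae_restrict_mem measurableSet_Ioo] with u hu
  exact mul_nonneg (Real.rpow_nonneg hu.1.le _) (Real.rpow_nonneg (by linarith [hu.2]) _)

lemma gammaRepIntegrable {q A : ℝ} (hq : 0 < q) (hA : 0 < A) :
    IntegrableOn (fun x : ℝ => x ^ (q-1) * Real.exp (-(A*x))) (Set.Ioi 0) := by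
  have h0 : IntegrableOn (fun x : ℝ => Real.exp (-x) * x ^ (q-1)) (Set.Ioi 0) :=
    Real.GammaIntegral_convergent hq
  have h1 : IntegrableOn (fun x : ℝ => Real.exp (-(A*x)) * (A*x) ^ (q-1)) (Set.Ioi 0) := by
    have := (integrableOn_Ioi_comp_mul_left_iff
      (fun x : ℝ => Real.exp (-x) * x ^ (q-1)) 0 hA).mpr (by simpa using h0)
    simpa using this
  have h2 : IntegrableOn (fun x : ℝ => (A ^ (q-1))⁻¹ * (Real.exp (-(A*x)) * (A*x) ^ (q-1)))
      (Set.Ioi 0) := h1.const_mul (A ^ (q-1))⁻¹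
  refine h2.congr_fun ?_ measurableSet_Ioi
  intro x hx
  simp only
  rw [Real.mul_rpow hA.le (le_of_lt hx)]
  field_simp [(Real.rpow_pos_of_pos hA (q-1)).ne']

lemma gammaRep {q A : ℝ} (hq : 0 < q) (hA : 0 < A) :
    ∫⁻ t in Set.Ioi (0:ℝ), ENNReal.ofReal (t ^ (q-1) * Real.exp (-(A*t)))
      = ENNReal.ofReal (Real.Gamma q / A ^ q) := by
  rw [← ofReal_integral_eq_lintegral_ofReal (gammaRepIntegrable hq hA)]
  · congr 1
    have key : A ^ (q-1) * ∫ t in Set.Ioi (0:ℝ), t ^ (q-1) * Real.exp (-(A*t))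
        = A⁻¹ * Real.Gamma q := by
      rw [← integral_const_mul]
      have : ∀ᵐ t ∂(volume.restrict (Set.Ioi (0:ℝ))),
          A ^ (q-1) * (t ^ (q-1) * Real.exp (-(A*t)))
            = (fun y => Real.exp (-y) * y ^ (q-1)) (A * t) := by
        filter_upwards [ae_restrict_mem measurableSet_Ioi] with t ht
        rw [Real.mul_rpow hA.le (le_of_lt ht)]; ring
      rw [integral_congr_ae this,
        integral_comp_mul_left_Ioi (fun y : ℝ => Real.exp (-y) * y ^ (q-1)) 0 hA, mul_zero,
        ← Real.Gamma_eq_integral hq, smul_eq_mul]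
    have hAq : A ^ (q-1) ≠ 0 := (Real.rpow_pos_of_pos hA _).ne'
    have : (∫ t in Set.Ioi (0:ℝ), t ^ (q-1) * Real.exp (-(A*t)))
        = A⁻¹ * Real.Gamma q / A ^ (q-1) := by
      field_simp at key ⊢; linarith [key]
    rw [this, Real.rpow_sub hA, Real.rpow_one]
    field_simp
  · filter_upwards [ae_restrict_mem measurableSet_Ioi] with t ht
    exact mul_nonneg (Real.rpow_nonneg (le_of_lt ht) _) (Real.exp_nonneg _)

lemma exp_tsum (x : ℝ) : Real.exp x = ∑' n : ℕ, x ^ n / n.factorial := by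
  rw [Real.exp_eq_exp_ℝ, NormedSpace.exp_eq_tsum_div]

lemma binom_lint {q s : ℝ} (hq : 0 < q) (hs0 : 0 ≤ s) (hs1 : s < 1) :
    ∑' m : ℕ, ENNReal.ofReal (Real.Gamma (q + m) / (m.factorial * Real.Gamma q) * s ^ m)
      = ENNReal.ofReal ((1 - s) ^ (-q)) := by
  have hA : (0:ℝ) < 1 - s := by linarith
  have hGq : (0:ℝ) < Real.Gamma q := Real.Gamma_pos_of_pos hq
  -- multiply both sides by ofReal (Γ q)
  rw [← ENNReal.mul_right_inj (a := ENNReal.ofReal (Real.Gamma q))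
      (by simp [hGq.ne', ENNReal.ofReal_eq_zero, not_le, hGq]) ENNReal.ofReal_ne_top]
  have hRHS : ENNReal.ofReal (Real.Gamma q) * ENNReal.ofReal ((1 - s) ^ (-q))
      = ENNReal.ofReal (Real.Gamma q / (1-s) ^ q) := by
    rw [← ENNReal.ofReal_mul hGq.le]
    congr 1
    rw [Real.rpow_neg hA.le, div_eq_mul_inv]
  rw [hRHS, ← gammaRep hq hA]
  -- pointwise series expansion of the integrand
  have hpt : ∀ t ∈ Set.Ioi (0:ℝ),
      ENNReal.ofReal (t ^ (q-1) * Real.exp (-((1-s)*t)))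
        = ∑' m : ℕ, ENNReal.ofReal (s ^ m / m.factorial * (t ^ (q + m - 1) * Real.exp (-t))) := by
    intro t ht
    have ht0 : (0:ℝ) < t := ht
    have h1 : t ^ (q-1) * Real.exp (-((1-s)*t))
        = ∑' m : ℕ, s ^ m / m.factorial * (t ^ (q + m - 1) * Real.exp (-t)) := by
      have : Real.exp (-((1-s)*t)) = Real.exp (-t) * Real.exp (s*t) := by
        rw [← Real.exp_add]; ring_nf
      rw [this, exp_tsum (s*t), ← tsum_mul_left, ← tsum_mul_left]
      congr 1; funext m
      rw [mul_pow]
      have : t ^ (q + m - 1) = t ^ (q - 1) * t ^ (m:ℕ) := by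
        rw [← Real.rpow_natCast t m, ← Real.rpow_add ht0]
        ring_nf
      rw [this]
      field_simp
    rw [h1, ENNReal.ofReal_tsum_of_nonneg]
    · intro m
      positivity
    · apply Summable.of_nonneg_of_le (fun m => by positivity)
        (fun m => ?_) (((Real.summable_pow_div_factorial (s*t)).mul_left
          (t ^ (q-1) * Real.exp (-t))))
      have : t ^ (q + m - 1) = t ^ (q - 1) * t ^ (m:ℕ) := by
        rw [← Real.rpow_natCast t m, ← Real.rpow_add ht0]
        ring_nf
      rw [this, mul_pow]
      apply le_of_eq
      field_simp
  rw [setLIntegral_congr_fun measurableSet_Ioi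
    hpt]
  rw [lintegral_tsum]
  · rw [← ENNReal.tsum_mul_left]
    refine tsum_congr fun m => ?_
    refine Eq.symm ?_
    have hmeas : Measurable fun t : ℝ => ENNReal.ofReal (t ^ (q + m - 1) * Real.exp (-t)) := by
      fun_prop
    have hc : (0:ℝ) ≤ s ^ m / m.factorial := by positivity
    calc ∫⁻ t in Set.Ioi (0:ℝ),
          ENNReal.ofReal (s ^ m / m.factorial * (t ^ (q + m - 1) * Real.exp (-t)))
        = ∫⁻ t in Set.Ioi (0:ℝ), ENNReal.ofReal (s ^ m / m.factorial)
            * ENNReal.ofReal (t ^ (q + m - 1) * Real.exp (-t)) := by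
          congr 1; funext t; rw [ENNReal.ofReal_mul hc]
      _ = ENNReal.ofReal (s ^ m / m.factorial)
            * ∫⁻ t in Set.Ioi (0:ℝ), ENNReal.ofReal (t ^ (q + m - 1) * Real.exp (-t)) := by
          rw [lintegral_const_mul _ hmeas]
      _ = ENNReal.ofReal (s ^ m / m.factorial) * ENNReal.ofReal (Real.Gamma (q + m)) := by
          congr 1
          have := gammaRep (q := q + m) (A := 1) (by positivity) one_pos
          simp only [one_mul, Real.one_rpow, div_one] at this
          exact this
      _ = ENNReal.ofReal (Real.Gamma q)
            * ENNReal.ofReal (Real.Gamma (q + m) / (m.factorial * Real.Gamma q) * s ^ m) := by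
          rw [← ENNReal.ofReal_mul hc, ← ENNReal.ofReal_mul hGq.le]
          congr 1
          field_simp
  · intro m
    apply Measurable.aemeasurable
    fun_prop

lemma triangle_meas : MeasurableSet {u : ℝ × ℝ | 0 < u.1 ∧ u.1 < u.2 ∧ u.2 < 1} := by
  apply MeasurableSet.inter
  · exact measurableSet_lt measurable_const measurable_fst
  apply MeasurableSet.inter
  · exact measurableSet_lt measurable_fst measurable_snd
  · exact measurableSet_lt measurable_snd measurable_const

lemma tri_lint (F : ℝ × ℝ → ENNReal) (hF : Measurable F) :
    ∫⁻ u in {u : ℝ × ℝ | 0 < u.1 ∧ u.1 < u.2 ∧ u.2 < 1}, F u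
      = ∫⁻ b in Set.Ioo (0:ℝ) 1, ∫⁻ a in Set.Ioo (0:ℝ) b, F (a, b) := by
  set T := {u : ℝ × ℝ | 0 < u.1 ∧ u.1 < u.2 ∧ u.2 < 1} with hTdef
  have hT : MeasurableSet T := triangle_meas
  rw [← lintegral_indicator hT]
  rw [show (volume : Measure (ℝ × ℝ)) = (volume : Measure ℝ).prod volume from rfl]
  rw [lintegral_prod_symm _ ((hF.indicator hT).aemeasurable)]
  rw [← lintegral_indicator (measurableSet_Ioo : MeasurableSet (Set.Ioo (0:ℝ) 1))]
  congr 1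
  funext b
  by_cases hb : b ∈ Set.Ioo (0:ℝ) 1
  · rw [Set.indicator_of_mem hb]
    rw [← lintegral_indicator (measurableSet_Ioo : MeasurableSet (Set.Ioo (0:ℝ) b))]
    congr 1
    funext a
    by_cases ha : a ∈ Set.Ioo (0:ℝ) b
    · rw [Set.indicator_of_mem ha, Set.indicator_of_mem]
      exact ⟨ha.1, ha.2, hb.2⟩
    · rw [Set.indicator_of_notMem ha, Set.indicator_of_notMem]
      intro hmem
      exact ha ⟨hmem.1, hmem.2.1⟩
  · rw [Set.indicator_of_notMem hb]
    rw [show (0:ENNReal) = ∫⁻ _ : ℝ, (0:ENNReal) from (lintegral_zero).symm]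
    congr 1
    funext a
    rw [Set.indicator_of_notMem]
    intro hmem
    exact hb ⟨lt_trans hmem.1 hmem.2.1, hmem.2.2⟩

theorem stmt16 (t x y : ℝ) (h1 : |t * x| < 1) (h2 : |x| < 1) (h3 : |x + y| < 1) :
    ∫ u in {u : ℝ × ℝ | 0 < u.1 ∧ u.1 < u.2 ∧ u.2 < 1},
        ((1 - u.1) / (1 - u.2)) ^ x * (u.2 / u.1) ^ (t * x) * (1 / (1 - u.2)) ^ y /
          ((1 - u.1) * u.2) =
      ∑' l : ℕ+,
        Real.Gamma ((l : ℕ) - x) * Real.Gamma (1 - x - y) /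
            (Real.Gamma (1 - x) * Real.Gamma ((l : ℕ) + 1 - x - y)) *
          (1 / ((l : ℕ) - t * x)) := by
  have hp1 : t * x < 1 := (abs_lt.mp h1).2
  have hx1 : x < 1 := (abs_lt.mp h2).2
  have hq : 0 < 1 - x := by linarith
  have hxy : x + y < 1 := (abs_lt.mp h3).2
  have hbb : 0 < 1 - x - y := by linarith
  have hGx : 0 < Real.Gamma (1 - x) := Real.Gamma_pos_of_pos hq
  -- abbreviations (as plain defs via `have`-free lets are avoided; use explicit terms)
  -- nonnegativity of RHS terms
  have hRnn : ∀ l : ℕ+, 0 ≤ Real.Gamma ((l : ℕ) - x) * Real.Gamma (1 - x - y) /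
      (Real.Gamma (1 - x) * Real.Gamma ((l : ℕ) + 1 - x - y)) * (1 / ((l : ℕ) - t * x)) := by
    intro l
    have hl1 : (1:ℝ) ≤ (l : ℕ) := by exact_mod_cast l.one_le
    have g1 : 0 < Real.Gamma ((l:ℕ) - x) := Real.Gamma_pos_of_pos (by linarith)
    have g2 : 0 < Real.Gamma (1 - x - y) := Real.Gamma_pos_of_pos hbb
    have g3 : 0 < Real.Gamma ((l:ℕ) + 1 - x - y) := Real.Gamma_pos_of_pos (by linarith)
    have g4 : (0:ℝ) < (l:ℕ) - t*x := by linarith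
    exact mul_nonneg (div_nonneg (mul_nonneg g1.le g2.le) (mul_nonneg hGx.le g3.le))
      (div_nonneg zero_le_one g4.le)
  have hmeasf : Measurable fun u : ℝ × ℝ =>
      ((1 - u.1) / (1 - u.2)) ^ x * (u.2 / u.1) ^ (t * x) * (1 / (1 - u.2)) ^ y /
        ((1 - u.1) * u.2) := by fun_prop
  have hnn : 0 ≤ᵐ[volume.restrict {u : ℝ × ℝ | 0 < u.1 ∧ u.1 < u.2 ∧ u.2 < 1}]
      fun u : ℝ × ℝ => ((1 - u.1) / (1 - u.2)) ^ x * (u.2 / u.1) ^ (t * x) *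
        (1 / (1 - u.2)) ^ y / ((1 - u.1) * u.2) := by
    filter_upwards [ae_restrict_mem triangle_meas] with u hu
    obtain ⟨hu1, hu12, hu2⟩ := hu
    have ha : (0:ℝ) < 1 - u.1 := by linarith
    have hd : (0:ℝ) < 1 - u.2 := by linarith
    have hc : (0:ℝ) < u.2 := lt_trans hu1 hu12
    refine div_nonneg (mul_nonneg (mul_nonneg (Real.rpow_nonneg (div_nonneg ha.le hd.le) _)
      (Real.rpow_nonneg (div_nonneg hc.le hu1.le) _))
      (Real.rpow_nonneg (div_nonneg zero_le_one hd.le) _)) (mul_nonneg ha.le hc.le)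
  rw [integral_eq_lintegral_of_nonneg_ae hnn hmeasf.aestronglyMeasurable]
  -- Step B: replace integrand by the clean product form
  have stepB : ∫⁻ u in {u : ℝ × ℝ | 0 < u.1 ∧ u.1 < u.2 ∧ u.2 < 1},
      ENNReal.ofReal (((1 - u.1) / (1 - u.2)) ^ x * (u.2 / u.1) ^ (t * x) *
        (1 / (1 - u.2)) ^ y / ((1 - u.1) * u.2))
      = ∫⁻ u in {u : ℝ × ℝ | 0 < u.1 ∧ u.1 < u.2 ∧ u.2 < 1},
      ENNReal.ofReal ((1 - u.1) ^ (x - 1) * (u.1 ^ (-(t*x)) *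
        (u.2 ^ (t*x-1) * (1 - u.2) ^ (-(x+y))))) := by
    apply setLIntegral_congr_fun triangle_meas
    rintro u ⟨hu1, hu12, hu2⟩
    dsimp only
    have ha : (0:ℝ) < 1 - u.1 := by linarith
    have hd : (0:ℝ) < 1 - u.2 := by linarith
    have hc : (0:ℝ) < u.2 := lt_trans hu1 hu12
    congr 1
    rw [Real.div_rpow ha.le hd.le, Real.div_rpow hc.le hu1.le,
      Real.div_rpow (by norm_num : (0:ℝ) ≤ 1) hd.le, Real.one_rpow,
      Real.rpow_sub ha, Real.rpow_sub hc, Real.rpow_one, Real.rpow_one,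
      Real.rpow_neg hu1.le, Real.rpow_neg hd.le, Real.rpow_add hd]
    have n1 : (1 - u.1 : ℝ) ^ x ≠ 0 := (Real.rpow_pos_of_pos ha _).ne'
    have n2 : (1 - u.2 : ℝ) ^ x ≠ 0 := (Real.rpow_pos_of_pos hd _).ne'
    have n3 : (1 - u.2 : ℝ) ^ y ≠ 0 := (Real.rpow_pos_of_pos hd _).ne'
    have n4 : (u.1 : ℝ) ^ (t*x) ≠ 0 := (Real.rpow_pos_of_pos hu1 _).ne'
    have n5 : (u.2 : ℝ) ^ (t*x) ≠ 0 := (Real.rpow_pos_of_pos hc _).ne'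
    field_simp
  rw [stepB]
  -- Step C: pointwise binomial series
  have stepC : ∫⁻ u in {u : ℝ × ℝ | 0 < u.1 ∧ u.1 < u.2 ∧ u.2 < 1},
      ENNReal.ofReal ((1 - u.1) ^ (x - 1) * (u.1 ^ (-(t*x)) *
        (u.2 ^ (t*x-1) * (1 - u.2) ^ (-(x+y)))))
      = ∫⁻ u in {u : ℝ × ℝ | 0 < u.1 ∧ u.1 < u.2 ∧ u.2 < 1},
        ∑' m : ℕ, ENNReal.ofReal
          (Real.Gamma (1 - x + m) / (m.factorial * Real.Gamma (1 - x)) * u.1 ^ m *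
            (u.1 ^ (-(t*x)) * (u.2 ^ (t*x-1) * (1 - u.2) ^ (-(x+y))))) := by
    apply setLIntegral_congr_fun triangle_meas
    rintro u ⟨hu1, hu12, hu2⟩
    dsimp only
    have hu11 : u.1 < 1 := lt_trans hu12 hu2
    have hd : (0:ℝ) < 1 - u.2 := by linarith
    have hc : (0:ℝ) < u.2 := lt_trans hu1 hu12
    have hK : (0:ℝ) ≤ u.1 ^ (-(t*x)) * (u.2 ^ (t*x-1) * (1 - u.2) ^ (-(x+y))) :=
      mul_nonneg (Real.rpow_nonneg hu1.le _)
        (mul_nonneg (Real.rpow_nonneg hc.le _) (Real.rpow_nonneg hd.le _))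
    rw [ENNReal.ofReal_mul (Real.rpow_nonneg (by linarith) _)]
    rw [show x - 1 = -(1-x) by ring, ← binom_lint hq hu1.le hu11, ← ENNReal.tsum_mul_right]
    congr 1
    funext m
    have ham : (0:ℝ) ≤ Real.Gamma (1 - x + m) / (m.factorial * Real.Gamma (1 - x)) * u.1 ^ m :=
      mul_nonneg (div_nonneg (Real.Gamma_pos_of_pos (by
        have : (0:ℝ) ≤ (m:ℝ) := Nat.cast_nonneg m
        linarith)).le (mul_nonneg (Nat.cast_nonneg _) hGx.le)) (pow_nonneg hu1.le m)
    rw [← ENNReal.ofReal_mul ham]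
  rw [stepC]
  -- Step D: swap sum and integral
  have hDmeas : ∀ m : ℕ, AEMeasurable (fun u : ℝ × ℝ => ENNReal.ofReal
      (Real.Gamma (1 - x + m) / (m.factorial * Real.Gamma (1 - x)) * u.1 ^ m *
        (u.1 ^ (-(t*x)) * (u.2 ^ (t*x-1) * (1 - u.2) ^ (-(x+y))))))
      (volume.restrict {u : ℝ × ℝ | 0 < u.1 ∧ u.1 < u.2 ∧ u.2 < 1}) := by
    intro m
    exact Measurable.aemeasurable (by fun_prop)
  rw [lintegral_tsum hDmeas]
  -- Step E: evaluate each integral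
  have stepE : ∀ m : ℕ, ∫⁻ u in {u : ℝ × ℝ | 0 < u.1 ∧ u.1 < u.2 ∧ u.2 < 1},
      ENNReal.ofReal (Real.Gamma (1 - x + m) / (m.factorial * Real.Gamma (1 - x)) * u.1 ^ m *
        (u.1 ^ (-(t*x)) * (u.2 ^ (t*x-1) * (1 - u.2) ^ (-(x+y)))))
      = ENNReal.ofReal (Real.Gamma (1 - x + m) * Real.Gamma (1 - x - y) /
          (Real.Gamma (1 - x) * Real.Gamma ((m:ℝ) + 1 + (1 - x - y))) *
          (1 / ((m:ℝ) + 1 - t * x))) := by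
    intro m
    rw [tri_lint _ (by fun_prop)]
    have hpm : (-1:ℝ) < (m:ℝ) - t*x := by
      have : (0:ℝ) ≤ (m:ℝ) := Nat.cast_nonneg m
      linarith
    have hpm1 : (0:ℝ) < (m:ℝ) + 1 - t*x := by
      have : (0:ℝ) ≤ (m:ℝ) := Nat.cast_nonneg m
      linarith
    have hinner : ∀ b ∈ Set.Ioo (0:ℝ) 1,
        (∫⁻ a in Set.Ioo (0:ℝ) b, ENNReal.ofReal
          (Real.Gamma (1 - x + m) / (m.factorial * Real.Gamma (1 - x)) * a ^ m *
            (a ^ (-(t*x)) * (b ^ (t*x-1) * (1 - b) ^ (-(x+y))))))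
        = ENNReal.ofReal ((Real.Gamma (1 - x + m) / (m.factorial * Real.Gamma (1 - x))
            / ((m:ℝ) + 1 - t*x)) * (b ^ (((m:ℝ)+1) - 1) * (1 - b) ^ ((1 - x - y) - 1))) := by
      intro b hbmem
      have hb0 : (0:ℝ) < b := hbmem.1
      have hb1 : b < 1 := hbmem.2
      have hdb : (0:ℝ) < 1 - b := by linarith
      have hGm : (0:ℝ) < Real.Gamma (1 - x + m) := Real.Gamma_pos_of_pos (by
        have : (0:ℝ) ≤ (m:ℝ) := Nat.cast_nonneg m
        linarith)
      have hamnn : (0:ℝ) ≤ Real.Gamma (1 - x + m) / (m.factorial * Real.Gamma (1 - x)) :=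
        div_nonneg hGm.le (mul_nonneg (Nat.cast_nonneg _) hGx.le)
      have hKb : (0:ℝ) ≤ Real.Gamma (1 - x + m) / (m.factorial * Real.Gamma (1 - x)) *
          (b ^ (t*x-1) * (1 - b) ^ (-(x+y))) :=
        mul_nonneg hamnn (mul_nonneg (Real.rpow_nonneg hb0.le _) (Real.rpow_nonneg hdb.le _))
      have e1 : ∀ a ∈ Set.Ioo (0:ℝ) b, ENNReal.ofReal
          (Real.Gamma (1 - x + m) / (m.factorial * Real.Gamma (1 - x)) * a ^ m *
            (a ^ (-(t*x)) * (b ^ (t*x-1) * (1 - b) ^ (-(x+y)))))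
          = ENNReal.ofReal (Real.Gamma (1 - x + m) / (m.factorial * Real.Gamma (1 - x)) *
              (b ^ (t*x-1) * (1 - b) ^ (-(x+y)))) * ENNReal.ofReal (a ^ ((m:ℝ) - t*x)) := by
        intro a hamem
        have ha0 : (0:ℝ) < a := hamem.1
        rw [← ENNReal.ofReal_mul hKb]
        congr 1
        rw [show (m:ℝ) - t*x = (m:ℝ) + (-(t*x)) by ring, Real.rpow_add ha0,
          Real.rpow_natCast]
        ring
      rw [setLIntegral_congr_fun measurableSet_Ioo e1,
        lintegral_const_mul _ (by fun_prop), pow_lint hpm hb0,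
        ← ENNReal.ofReal_mul hKb]
      congr 1
      have hcomb : b ^ (t*x-1) * b ^ ((m:ℝ) - t*x + 1) = b ^ (((m:ℝ)+1) - 1) := by
        rw [← Real.rpow_add hb0]
        ring_nf
      have hexp : ((1:ℝ) - x - y) - 1 = -(x+y) := by ring
      rw [hexp, ← hcomb, show (m:ℝ) - t*x + 1 = (m:ℝ) + 1 - t*x from by ring]
      ring
    rw [setLIntegral_congr_fun measurableSet_Ioo hinner]
    have hGm : (0:ℝ) < Real.Gamma (1 - x + m) := Real.Gamma_pos_of_pos (by
      have : (0:ℝ) ≤ (m:ℝ) := Nat.cast_nonneg m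
      linarith)
    have hfac : (0:ℝ) ≤ Real.Gamma (1 - x + m) / (m.factorial * Real.Gamma (1 - x))
        / ((m:ℝ) + 1 - t*x) :=
      div_nonneg (div_nonneg hGm.le (mul_nonneg (Nat.cast_nonneg _) hGx.le)) hpm1.le
    have e2 : ∀ b' ∈ Set.Ioo (0:ℝ) 1, ENNReal.ofReal
        ((Real.Gamma (1 - x + m) / (m.factorial * Real.Gamma (1 - x)) / ((m:ℝ) + 1 - t*x)) *
          (b' ^ (((m:ℝ)+1) - 1) * (1 - b') ^ ((1 - x - y) - 1)))
        = ENNReal.ofReal (Real.Gamma (1 - x + m) / (m.factorial * Real.Gamma (1 - x))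
            / ((m:ℝ) + 1 - t*x))
          * ENNReal.ofReal (b' ^ (((m:ℝ)+1) - 1) * (1 - b') ^ ((1 - x - y) - 1)) := by
      intro b' _
      rw [← ENNReal.ofReal_mul hfac]
    rw [setLIntegral_congr_fun measurableSet_Ioo e2,
      lintegral_const_mul _ (by fun_prop),
      beta_lint (by positivity : (0:ℝ) < (m:ℝ)+1) hbb, ← ENNReal.ofReal_mul hfac]
    congr 1
    have hGfac : Real.Gamma ((m:ℝ) + 1) = (m.factorial : ℝ) := by
      exact_mod_cast Real.Gamma_nat_eq_factorial m
    have hGd : (0:ℝ) < Real.Gamma ((m:ℝ) + 1 + (1 - x - y)) := Real.Gamma_pos_of_pos (by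
      have : (0:ℝ) ≤ (m:ℝ) := Nat.cast_nonneg m
      linarith)
    have hfm : ((m.factorial : ℝ)) ≠ 0 := Nat.cast_ne_zero.mpr m.factorial_ne_zero
    rw [hGfac]
    field_simp
  simp only [stepE]
  have hfin : (∑' m : ℕ, ENNReal.ofReal (Real.Gamma (1 - x + m) * Real.Gamma (1 - x - y) /
        (Real.Gamma (1 - x) * Real.Gamma ((m:ℝ) + 1 + (1 - x - y))) *
        (1 / ((m:ℝ) + 1 - t * x))))
      = ∑' l : ℕ+, ENNReal.ofReal (Real.Gamma ((l : ℕ) - x) * Real.Gamma (1 - x - y) /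
          (Real.Gamma (1 - x) * Real.Gamma ((l : ℕ) + 1 - x - y)) *
          (1 / ((l : ℕ) - t * x))) := by
    rw [← Equiv.tsum_eq (Equiv.pnatEquivNat.symm)
      (fun l : ℕ+ => ENNReal.ofReal (Real.Gamma ((l : ℕ) - x) * Real.Gamma (1 - x - y) /
        (Real.Gamma (1 - x) * Real.Gamma ((l : ℕ) + 1 - x - y)) * (1 / ((l : ℕ) - t * x))))]
    refine tsum_congr fun m => ?_
    have hcoe : (((Equiv.pnatEquivNat.symm m : ℕ+) : ℕ) : ℝ) = (m:ℝ) + 1 := by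
      simp [Equiv.pnatEquivNat]
    simp only [hcoe]
    congr 1
    rw [show (1:ℝ) - x + (m:ℝ) = (m:ℝ) + 1 - x by ring,
      show (m:ℝ) + 1 + (1 - x - y) = (m:ℝ) + 1 + 1 - x - y by ring]
  rw [hfin, ENNReal.tsum_toReal_eq (fun l => ENNReal.ofReal_ne_top)]
  exact tsum_congr fun l => ENNReal.toReal_ofReal (hRnn l)

end stmt16aux
end
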